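/- arXiv:2006.16815 — 2 statements merged into one kernel-verified Lean document; each statement's English description precedes it below -/
import Mathlib

section
/- Define Q_d(λ) = q_d(λ)·q_{d-2}(λ) − q_{d-1}(λ)^2 where q_n = M_{K_n}. Then for d ≥ 5, Q_d(λ) = λ·q_{d-3}(λ)·(q_{d-2}(λ) − λ·q_{d-3}(λ)) + (d-1)(d-3)·λ^2·Q_{d-2}(λ). -/
open Finset SimpleGraph

noncomputable section

/-- `M` is a matching of `G`: a finset of edges of `G`, pairwise vertex-disjoint. -/
def IsMatchingSet {V : Type*} (G : SimpleGraph V) (M : Finset (Sym2 V)) : Prop :=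
  (∀ e ∈ M, e ∈ G.edgeSet) ∧
    ∀ e ∈ M, ∀ f ∈ M, e ≠ f → ∀ v : V, ¬(v ∈ e ∧ v ∈ f)

/-- The finset of all matchings of `G`. -/
def matchingsOf {V : Type*} [Fintype V] (G : SimpleGraph V) : Finset (Finset (Sym2 V)) := by
  classical exact Finset.univ.filter fun M => IsMatchingSet G M

/-- `m_k(G)`: the number of matchings of size `k` in `G`. -/
def mCount {V : Type*} [Fintype V] (G : SimpleGraph V) (k : ℕ) : ℕ := by
  classical exact ((matchingsOf G).filter fun M => M.card = k).card

/-- The matching generating polynomial (partition function) `M_G(λ) = ∑_M λ^{|M|}`. -/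
def matchingGen {V : Type*} [Fintype V] (G : SimpleGraph V) (lam : ℝ) : ℝ :=
  ∑ M ∈ matchingsOf G, lam ^ M.card

/-- `q n` : the matching generating polynomial of the complete graph `K_n`. -/
def q (n : ℕ) (lam : ℝ) : ℝ := matchingGen (⊤ : SimpleGraph (Fin n)) lam

/-- `Q_d(λ) = q_d(λ)·q_{d-2}(λ) − q_{d-1}(λ)²`. -/
def Q (d : ℕ) (lam : ℝ) : ℝ := q d lam * q (d - 2) lam - (q (d - 1) lam) ^ 2

-- auxiliary lemmas

lemma mem_matchingsOf {V : Type*} [Fintype V] {G : SimpleGraph V} {M : Finset (Sym2 V)} :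
    M ∈ matchingsOf G ↔ IsMatchingSet G M := by
  classical
  simp [matchingsOf]

lemma isMatchingSet_top_iff {V : Type*} {M : Finset (Sym2 V)} :
    IsMatchingSet (⊤ : SimpleGraph V) M ↔
      (∀ e ∈ M, ¬ e.IsDiag) ∧
        ∀ e ∈ M, ∀ f ∈ M, e ≠ f → ∀ v : V, ¬(v ∈ e ∧ v ∈ f) := by
  unfold IsMatchingSet
  rw [edgeSet_top]
  rfl

lemma isMatchingSet_image {A B : Type*} {f : A → B} (hf : Function.Injective f)
    {M : Finset (Sym2 A)} [DecidableEq B] (h : IsMatchingSet (⊤ : SimpleGraph A) M) :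
    IsMatchingSet (⊤ : SimpleGraph B) (M.image (Sym2.map f)) := by
  rw [isMatchingSet_top_iff] at h ⊢
  obtain ⟨h1, h2⟩ := h
  constructor
  · rintro e he
    simp only [Finset.mem_image] at he
    obtain ⟨e', he', rfl⟩ := he
    rw [Sym2.isDiag_map hf]
    exact h1 e' he'
  · rintro e he f hef hne v ⟨hv1, hv2⟩
    simp only [Finset.mem_image] at he hef
    obtain ⟨e', he', rfl⟩ := he
    obtain ⟨f', hf', rfl⟩ := hef
    obtain ⟨a, ha, rfl⟩ := Sym2.mem_map.mp hv1
    obtain ⟨b, hb, hba⟩ := Sym2.mem_map.mp hv2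
    have hab : b = a := hf hba
    have : e' ≠ f' := fun hh => hne (by rw [hh])
    exact h2 e' he' f' hf' this a ⟨ha, hab ▸ hb⟩

/-- key bijection: matchings of `K_V` using only vertices satisfying `P`
correspond to matchings of the complete graph on the subtype. -/
lemma sum_matchings_subtype {V : Type*} [Fintype V] [DecidableEq V]
    (P : V → Prop) [DecidablePred P] (lam : ℝ) (t : Finset (Finset (Sym2 V)))
    (ht : ∀ M, M ∈ t ↔ (IsMatchingSet (⊤ : SimpleGraph V) M ∧ ∀ e ∈ M, ∀ x ∈ e, P x)) :
    ∑ M ∈ t, lam ^ M.card = matchingGen (⊤ : SimpleGraph {x // P x}) lam := by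
  classical
  rw [matchingGen]
  refine (Finset.sum_bij (fun M _ => M.image (Sym2.map (Subtype.val : {x // P x} → V)))
    ?_ ?_ ?_ ?_).symm
  · intro M hM
    rw [mem_matchingsOf] at hM
    rw [ht]
    refine ⟨isMatchingSet_image Subtype.val_injective hM, ?_⟩
    intro e he x hx
    simp only [Finset.mem_image] at he
    obtain ⟨e', he', rfl⟩ := he
    obtain ⟨a, ha, hax⟩ := Sym2.mem_map.mp hx
    exact hax ▸ a.2
  · intro M1 h1 M2 h2 hEq
    exact Finset.image_injective (Sym2.map.injective Subtype.val_injective) hEq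
  · intro M hM
    rw [ht] at hM
    obtain ⟨hM, hP⟩ := hM
    refine ⟨M.attach.image (fun e => Sym2.attachWith e.1 (fun x hx => hP e.1 e.2 x hx)), ?_, ?_⟩
    · rw [mem_matchingsOf, isMatchingSet_top_iff]
      rw [isMatchingSet_top_iff] at hM
      obtain ⟨h1, h2⟩ := hM
      constructor
      · rintro e he
        simp only [Finset.mem_image, Finset.mem_attach, true_and] at he
        obtain ⟨⟨e', he'⟩, rfl⟩ := he
        intro hd
        have hd2 : (Sym2.IsDiag ((Sym2.attachWith e' (fun x hx => hP e' he' x hx)).map Subtype.val)) :=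
          (Sym2.isDiag_map Subtype.val_injective).mpr hd
        rw [Sym2.attachWith_map_subtypeVal] at hd2
        exact h1 e' he' hd2
      · rintro e he f hf hne v ⟨hv1, hv2⟩
        simp only [Finset.mem_image, Finset.mem_attach, true_and] at he hf
        obtain ⟨⟨e', he'⟩, rfl⟩ := he
        obtain ⟨⟨f', hf'⟩, rfl⟩ := hf
        have hne' : e' ≠ f' := by
          rintro rfl; exact hne rfl
        have hv1' : (v : V) ∈ e' := by
          rw [← Sym2.attachWith_map_subtypeVal (fun x hx => hP e' he' x hx)]
          exact Sym2.mem_map.mpr ⟨v, hv1, rfl⟩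
        have hv2' : (v : V) ∈ f' := by
          rw [← Sym2.attachWith_map_subtypeVal (fun x hx => hP f' hf' x hx)]
          exact Sym2.mem_map.mpr ⟨v, hv2, rfl⟩
        exact h2 e' he' f' hf' hne' v ⟨hv1', hv2'⟩
    · rw [Finset.image_image]
      have : ((fun e : Sym2 {x // P x} => e.map Subtype.val) ∘
          (fun e : {e // e ∈ M} => Sym2.attachWith e.1 (fun x hx => hP e.1 e.2 x hx)))
          = fun e : {e // e ∈ M} => e.1 := by
        funext e
        exact Sym2.attachWith_map_subtypeVal _
      rw [this, Finset.attach_image_val]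
  · intro M hM
    rw [Finset.card_image_of_injective _ (Sym2.map.injective Subtype.val_injective)]

/-- matching generating polynomial of complete graph only depends on cardinality. -/
lemma matchingGen_top_equiv {V W : Type*} [Fintype V] [Fintype W] (e : V ≃ W) (lam : ℝ) :
    matchingGen (⊤ : SimpleGraph V) lam = matchingGen (⊤ : SimpleGraph W) lam := by
  classical
  rw [matchingGen, matchingGen]
  refine Finset.sum_nbij' (fun M => M.image (Sym2.map e))
    (fun M => M.image (Sym2.map e.symm)) ?_ ?_ ?_ ?_ ?_
  · intro M hM
    rw [mem_matchingsOf] at hM ⊢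
    exact isMatchingSet_image e.injective hM
  · intro M hM
    rw [mem_matchingsOf] at hM ⊢
    exact isMatchingSet_image e.symm.injective hM
  · intro M hM
    rw [Finset.image_image]
    have : ((Sym2.map (e.symm : W → V)) ∘ (Sym2.map (e : V → W))) = id := by
      funext x
      simp [Sym2.map_map, Equiv.symm_comp_self]
    rw [this, Finset.image_id]
  · intro M hM
    rw [Finset.image_image]
    have : ((Sym2.map (e : V → W)) ∘ (Sym2.map (e.symm : W → V))) = id := by
      funext x
      simp [Sym2.map_map, Equiv.self_comp_symm]
    rw [this, Finset.image_id]
  · intro M hM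
    rw [Finset.card_image_of_injective _ (Sym2.map.injective e.injective)]

lemma matchingGen_top_card {V : Type*} [Fintype V] {n : ℕ} (h : Fintype.card V = n) (lam : ℝ) :
    matchingGen (⊤ : SimpleGraph V) lam = q n lam := by
  rw [q]
  exact matchingGen_top_equiv (Fintype.equivFinOfCardEq h) lam

lemma isMatchingSet_subset {V : Type*} {G : SimpleGraph V} {M N : Finset (Sym2 V)}
    (h : N ⊆ M) (hM : IsMatchingSet G M) : IsMatchingSet G N :=
  ⟨fun e he => hM.1 e (h he), fun e he f hf => hM.2 e (h he) f (h hf)⟩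

set_option maxHeartbeats 2000000 in
lemma q_rec (n : ℕ) (lam : ℝ) :
    q (n + 2) lam = q (n + 1) lam + ((n : ℝ) + 1) * lam * q n lam := by
  classical
  set v : Fin (n + 2) := 0 with hv
  have hA : ∑ M ∈ (matchingsOf (⊤ : SimpleGraph (Fin (n+2)))).filter
      (fun M => ∀ e ∈ M, ∀ x ∈ e, x ≠ v), lam ^ M.card = q (n+1) lam := by
    rw [sum_matchings_subtype (fun x => x ≠ v) lam _
      (fun M => by rw [Finset.mem_filter, mem_matchingsOf])]
    apply matchingGen_top_card
    have h1 : (univ.filter (fun x : Fin (n+2) => x ≠ v)) = univ.erase v :=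
      Finset.filter_ne' _ _
    rw [Fintype.card_subtype, h1, Finset.card_erase_of_mem (Finset.mem_univ v),
      Finset.card_univ, Fintype.card_fin]
    omega
  have hB : ∑ M ∈ (matchingsOf (⊤ : SimpleGraph (Fin (n+2)))).filter
      (fun M => ¬ ∀ e ∈ M, ∀ x ∈ e, x ≠ v), lam ^ M.card = ((n:ℝ)+1) * lam * q n lam := by
    set s := (matchingsOf (⊤ : SimpleGraph (Fin (n+2)))).filter
      (fun M => ¬ ∀ e ∈ M, ∀ x ∈ e, x ≠ v) with hs
    set g : Finset (Sym2 (Fin (n+2))) → Fin (n+2) :=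
      fun M => if h : ∃ w, s(v, w) ∈ M then h.choose else v with hg
    have hgs : ∀ M ∈ s, s(v, g M) ∈ M := by
      intro M hM
      rw [hs, Finset.mem_filter] at hM
      obtain ⟨hM1, hM2⟩ := hM
      push_neg at hM2
      obtain ⟨e, he, x, hx, hxv⟩ := hM2
      subst hxv
      have hex : ∃ w, s(v, w) ∈ M := ⟨Sym2.Mem.other hx, by rw [Sym2.other_spec hx]; exact he⟩
      rw [hg]
      dsimp only
      rw [dif_pos hex]
      exact hex.choose_spec
    have hgne : ∀ M ∈ s, g M ≠ v := by
      intro M hM hgv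
      have h1 := hgs M hM
      rw [hs, Finset.mem_filter, mem_matchingsOf, isMatchingSet_top_iff] at hM
      rw [hgv] at h1
      exact (hM.1.1 _ h1) (by rw [Sym2.mk_isDiag_iff])
    have hmaps : ∀ M ∈ s, g M ∈ univ.filter (fun w => w ≠ v) := by
      intro M hM
      rw [Finset.mem_filter]
      exact ⟨Finset.mem_univ _, hgne M hM⟩
    rw [← Finset.sum_fiberwise_of_maps_to hmaps (fun M => lam ^ M.card)]
    have hfiber : ∀ w ∈ univ.filter (fun w : Fin (n+2) => w ≠ v),
        ∑ M ∈ s.filter (fun M => g M = w), lam ^ M.card = lam * q n lam := by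
      intro w hw
      have hwv : w ≠ v := (Finset.mem_filter.mp hw).2
      have hfe : s.filter (fun M => g M = w)
          = (matchingsOf (⊤ : SimpleGraph (Fin (n+2)))).filter (fun M => s(v, w) ∈ M) := by
        ext M
        constructor
        · intro hM
          rw [Finset.mem_filter] at hM
          obtain ⟨hMs, hgw⟩ := hM
          have h1 := hgs M hMs
          rw [hgw] at h1
          rw [hs, Finset.mem_filter] at hMs
          exact Finset.mem_filter.mpr ⟨hMs.1, h1⟩
        · intro hM
          rw [Finset.mem_filter] at hM
          obtain ⟨hM1, hvw⟩ := hM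
          have hMs : M ∈ s := by
            rw [hs, Finset.mem_filter]
            refine ⟨hM1, ?_⟩
            push_neg
            exact ⟨s(v,w), hvw, v, Sym2.mem_mk_left v w, rfl⟩
          refine Finset.mem_filter.mpr ⟨hMs, ?_⟩
          have huniq : ∀ w', s(v, w') ∈ M → w' = w := by
            intro w' hw'
            by_contra hne
            have hEdges : s(v, w') ≠ s(v, w) := fun h => hne (Sym2.congr_right.mp h)
            exact (mem_matchingsOf.mp hM1).2 _ hw' _ hvw hEdges v
              ⟨Sym2.mem_mk_left v w', Sym2.mem_mk_left v w⟩
          have hex : ∃ w', s(v, w') ∈ M := ⟨w, hvw⟩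
          rw [hg]
          dsimp only
          rw [dif_pos hex]
          exact huniq _ hex.choose_spec
      rw [hfe]
      have hbij : ∑ M ∈ (matchingsOf (⊤ : SimpleGraph (Fin (n+2)))).filter
            (fun M => s(v,w) ∈ M), lam ^ M.card
          = ∑ M ∈ (matchingsOf (⊤ : SimpleGraph (Fin (n+2)))).filter
              (fun M => ∀ e ∈ M, ∀ x ∈ e, x ≠ v ∧ x ≠ w), lam * lam ^ M.card := by
        refine Finset.sum_nbij' (fun M => M.erase s(v,w)) (fun M => insert s(v,w) M)
          ?_ ?_ ?_ ?_ ?_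
        · intro M hM
          rw [Finset.mem_filter, mem_matchingsOf] at hM
          obtain ⟨hM1, hvw⟩ := hM
          rw [Finset.mem_filter, mem_matchingsOf]
          refine ⟨isMatchingSet_subset (Finset.erase_subset _ _) hM1, ?_⟩
          intro e he x hx
          have heM : e ∈ M := Finset.mem_of_mem_erase he
          have hene : e ≠ s(v,w) := Finset.ne_of_mem_erase he
          refine ⟨fun hxv => ?_, fun hxw => ?_⟩
          · exact hM1.2 e heM _ hvw hene x ⟨hx, by rw [hxv]; exact Sym2.mem_mk_left v w⟩
          · exact hM1.2 e heM _ hvw hene x ⟨hx, by rw [hxw]; exact Sym2.mem_mk_right v w⟩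
        · intro M hM
          rw [Finset.mem_filter, mem_matchingsOf] at hM
          obtain ⟨hM1, havoid⟩ := hM
          rw [Finset.mem_filter, mem_matchingsOf]
          constructor
          · rw [isMatchingSet_top_iff] at hM1 ⊢
            constructor
            · intro e he
              rcases Finset.mem_insert.mp he with rfl | he'
              · rw [Sym2.mk_isDiag_iff]
                exact fun h => hwv h.symm
              · exact hM1.1 e he'
            · intro e he f hf hne x hxef
              rcases Finset.mem_insert.mp he with rfl | he' <;>
                rcases Finset.mem_insert.mp hf with rfl | hf'
              · exact hne rfl
              · obtain ⟨hx1, hx2⟩ := hxef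
                rcases Sym2.mem_iff.mp hx1 with h | h
                · exact (havoid f hf' x hx2).1 h
                · exact (havoid f hf' x hx2).2 h
              · obtain ⟨hx1, hx2⟩ := hxef
                rcases Sym2.mem_iff.mp hx2 with h | h
                · exact (havoid e he' x hx1).1 h
                · exact (havoid e he' x hx1).2 h
              · exact hM1.2 e he' f hf' hne x hxef
          · exact Finset.mem_insert_self _ _
        · intro M hM
          exact Finset.insert_erase (Finset.mem_filter.mp hM).2
        · intro M hM
          apply Finset.erase_insert
          intro hmem
          have := (Finset.mem_filter.mp hM).2 _ hmem v (Sym2.mem_mk_left v w)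
          exact this.1 rfl
        · intro M hM
          have hvwM : s(v,w) ∈ M := (Finset.mem_filter.mp hM).2
          rw [Finset.card_erase_of_mem hvwM, ← pow_succ',
            Nat.sub_add_cancel (Finset.card_pos.mpr ⟨_, hvwM⟩)]
      rw [hbij, ← Finset.mul_sum, sum_matchings_subtype (fun x => x ≠ v ∧ x ≠ w) lam _
        (fun M => by rw [Finset.mem_filter, mem_matchingsOf])]
      congr 1
      apply matchingGen_top_card
      have h1 : (univ.filter (fun x : Fin (n+2) => x ≠ v ∧ x ≠ w))
          = (univ.erase v).erase w := by
        ext x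
        simp only [Finset.mem_filter, Finset.mem_univ, true_and, Finset.mem_erase]
        tauto
      rw [Fintype.card_subtype, h1, Finset.card_erase_of_mem
          (Finset.mem_erase.mpr ⟨hwv, Finset.mem_univ w⟩),
        Finset.card_erase_of_mem (Finset.mem_univ v), Finset.card_univ, Fintype.card_fin]
      omega
    rw [Finset.sum_congr rfl hfiber, Finset.sum_const]
    have hcard : (univ.filter (fun w : Fin (n+2) => w ≠ v)).card = n + 1 := by
      rw [Finset.filter_ne', Finset.card_erase_of_mem (Finset.mem_univ v),
        Finset.card_univ, Fintype.card_fin]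
      omega
    rw [hcard, nsmul_eq_mul]
    push_cast
    ring
  have hsplit := Finset.sum_filter_add_sum_filter_not
    (matchingsOf (⊤ : SimpleGraph (Fin (n+2))))
    (fun M => ∀ e ∈ M, ∀ x ∈ e, x ≠ v) (fun M => lam ^ M.card)
  calc q (n+2) lam = ∑ M ∈ matchingsOf (⊤ : SimpleGraph (Fin (n+2))), lam ^ M.card := rfl
    _ = _ := by rw [← hsplit, hA, hB]

/-- for `d ≥ 5`,
`Q_d(λ) = λ·q_{d-3}(λ)·(q_{d-2}(λ) − λ·q_{d-3}(λ)) + (d-1)(d-3)·λ²·Q_{d-2}(λ)`. -/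
theorem Q_recursion_two (d : ℕ) (hd : 5 ≤ d) (lam : ℝ) :
    Q d lam = lam * q (d - 3) lam * (q (d - 2) lam - lam * q (d - 3) lam)
      + ((d : ℝ) - 1) * ((d : ℝ) - 3) * lam ^ 2 * Q (d - 2) lam := by
  obtain ⟨k, rfl⟩ : ∃ k, d = k + 5 := ⟨d - 5, by omega⟩
  simp only [Q, show k + 5 - 2 = k + 3 by omega, show k + 5 - 1 = k + 4 by omega,
    show k + 5 - 3 = k + 2 by omega, show k + 3 - 2 = k + 1 by omega,
    show k + 3 - 1 = k + 2 by omega]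
  have r1 := q_rec (k + 3) lam
  have r2 := q_rec (k + 2) lam
  have r3 := q_rec (k + 1) lam
  rw [show k + 3 + 2 = k + 5 by omega, show k + 3 + 1 = k + 4 by omega] at r1
  rw [show k + 2 + 2 = k + 4 by omega, show k + 2 + 1 = k + 3 by omega] at r2
  rw [show k + 1 + 2 = k + 3 by omega, show k + 1 + 1 = k + 2 by omega] at r3
  rw [r1, r2, r3]
  push_cast
  ring
end
end

section
/- Let G be a d-regular graph with no connected component isomorphic to K_{d+1}. Then ρ(C_4, K_{d+1}) − ρ(C_4, G) ≤ (3(d-2)/2)·(ρ(C_3, K_{d+1}) − ρ(C_3, G)), where ρ(H, G) = N(H, G)/v(G). -/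
open Finset SimpleGraph

noncomputable section

/-- `N(C₃, G)`: the number of (unlabeled) triangles of `G`. -/
def triCount {V : Type*} [Fintype V] (G : SimpleGraph V) : ℕ := by
  classical exact (G.cliqueFinset 3).card

/-- The number of cyclically ordered (labeled) 4-cycles of `G`; each unlabeled
4-cycle is counted 8 times, so `N(C₄, G)` equals this number divided by 8. -/
def c4Labeled {V : Type*} [Fintype V] (G : SimpleGraph V) : ℕ := by
  classical exact
    ((Finset.univ : Finset (V × V × V × V)).filter fun p =>
      p.1 ≠ p.2.1 ∧ p.1 ≠ p.2.2.1 ∧ p.1 ≠ p.2.2.2 ∧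
      p.2.1 ≠ p.2.2.1 ∧ p.2.1 ≠ p.2.2.2 ∧ p.2.2.1 ≠ p.2.2.2 ∧
      G.Adj p.1 p.2.1 ∧ G.Adj p.2.1 p.2.2.1 ∧
      G.Adj p.2.2.1 p.2.2.2 ∧ G.Adj p.2.2.2 p.1).card

/-- `ρ(C₃, G)`: triangle density. -/
def rho3 {V : Type*} [Fintype V] (G : SimpleGraph V) : ℝ :=
  (triCount G : ℝ) / (Fintype.card V)

/-- `ρ(C₄, G)`: density of (unlabeled) 4-cycles. -/
def rho4 {V : Type*} [Fintype V] (G : SimpleGraph V) : ℝ :=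
  (c4Labeled G : ℝ) / (8 * Fintype.card V)


section Aux
variable {V : Type*} [Fintype V] [DecidableEq V] (G : SimpleGraph V) [DecidableRel G.Adj]

/-- number of non-neighbors of `a` within `N(v) \ {a}` -/
def nuAux (v a : V) : ℕ :=
  (((G.neighborFinset v).erase a).filter fun x => ¬ G.Adj a x).card

def svAux (v : V) : ℕ := ∑ a ∈ G.neighborFinset v, nuAux G v a

lemma filter_adj_erase (v a : V) :
    ((G.neighborFinset v).erase a).filter (fun x => G.Adj a x)
      = G.neighborFinset v ∩ G.neighborFinset a := by
  ext x
  simp only [mem_filter, mem_erase, mem_inter, mem_neighborFinset]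
  constructor
  · rintro ⟨⟨_, h⟩, h2⟩; exact ⟨h, h2⟩
  · rintro ⟨h, h2⟩; exact ⟨⟨(G.ne_of_adj h2).symm, h⟩, h2⟩

lemma inter_nbr_card {v a : V} (ha : G.Adj v a) :
    (G.neighborFinset v ∩ G.neighborFinset a).card + nuAux G v a = G.degree v - 1 := by
  rw [nuAux, ← filter_adj_erase, card_filter_add_card_filter_not,
    card_erase_of_mem ((G.mem_neighborFinset v a).2 ha), card_neighborFinset_eq_degree]

def triLabeled : ℕ :=
  ((Finset.univ : Finset (V × V × V)).filter fun t =>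
    G.Adj t.1 t.2.1 ∧ G.Adj t.1 t.2.2 ∧ G.Adj t.2.1 t.2.2).card

lemma triLabeled_eq_sum :
    triLabeled G = ∑ v, ∑ a ∈ G.neighborFinset v,
      (G.neighborFinset v ∩ G.neighborFinset a).card := by
  rw [triLabeled, Finset.card_filter, Fintype.sum_prod_type]
  refine Finset.sum_congr rfl fun v _ => ?_
  rw [Fintype.sum_prod_type, G.neighborFinset_eq_filter, Finset.sum_filter]
  refine Finset.sum_congr rfl fun a _ => ?_
  by_cases h : G.Adj v a
  · simp only [h, if_true, true_and]
    have he : filter (fun w => G.Adj v w) univ ∩ G.neighborFinset a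
        = filter (fun c => G.Adj v c ∧ G.Adj a c) univ := by
      ext c; simp [mem_neighborFinset]
    rw [he, Finset.card_filter]
  · simp [h]


lemma fiber_card {a b c : V} (hab : G.Adj a b) (hac : G.Adj a c) (hbc : G.Adj b c) :
    (((Finset.univ : Finset (V × V × V)).filter fun t =>
      G.Adj t.1 t.2.1 ∧ G.Adj t.1 t.2.2 ∧ G.Adj t.2.1 t.2.2).filter fun t =>
        ({t.1, t.2.1, t.2.2} : Finset V) = {a, b, c}).card = 6 := by
  have nab := G.ne_of_adj hab
  have nac := G.ne_of_adj hac
  have nbc := G.ne_of_adj hbc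
  have hset : (((Finset.univ : Finset (V × V × V)).filter fun t =>
      G.Adj t.1 t.2.1 ∧ G.Adj t.1 t.2.2 ∧ G.Adj t.2.1 t.2.2).filter fun t =>
        ({t.1, t.2.1, t.2.2} : Finset V) = {a, b, c})
      = {(a,b,c),(a,c,b),(b,a,c),(b,c,a),(c,a,b),(c,b,a)} := by
    ext ⟨x, y, z⟩
    simp only [mem_filter, mem_univ, true_and, mem_insert, mem_singleton, Prod.mk.injEq]
    constructor
    · rintro ⟨⟨h1, h2, h3⟩, h4⟩
      have hx : x = a ∨ x = b ∨ x = c := by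
        have : x ∈ ({a,b,c} : Finset V) := h4 ▸ (by simp)
        simpa using this
      have hy : y = a ∨ y = b ∨ y = c := by
        have : y ∈ ({a,b,c} : Finset V) := h4 ▸ (by simp)
        simpa using this
      have hz : z = a ∨ z = b ∨ z = c := by
        have : z ∈ ({a,b,c} : Finset V) := h4 ▸ (by simp)
        simpa using this
      have n1 := G.ne_of_adj h1
      have n2 := G.ne_of_adj h2
      have n3 := G.ne_of_adj h3
      rcases hx with rfl | rfl | rfl <;> rcases hy with rfl | rfl | rfl <;>
        rcases hz with rfl | rfl | rfl <;> simp_all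
    · have e1 : ({b,a,c} : Finset V) = {a,b,c} := by ext w; simp; tauto
      have e2 : ({c,a,b} : Finset V) = {a,b,c} := by ext w; simp; tauto
      have e3 : ({a,c,b} : Finset V) = {a,b,c} := by ext w; simp; tauto
      have e4 : ({b,c,a} : Finset V) = {a,b,c} := by ext w; simp; tauto
      have e5 : ({c,b,a} : Finset V) = {a,b,c} := by ext w; simp; tauto
      rintro (⟨rfl,rfl,rfl⟩|⟨rfl,rfl,rfl⟩|⟨rfl,rfl,rfl⟩|⟨rfl,rfl,rfl⟩|⟨rfl,rfl,rfl⟩|⟨rfl,rfl,rfl⟩) <;>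
        exact ⟨⟨by first | assumption | exact G.adj_symm ‹_›,
                by first | assumption | exact G.adj_symm ‹_›,
                by first | assumption | exact G.adj_symm ‹_›⟩,
               by first | rfl | assumption⟩
  rw [hset]
  rw [Finset.card_insert_of_notMem (by simp [Prod.ext_iff]; tauto),
      Finset.card_insert_of_notMem (by simp [Prod.ext_iff]; tauto),
      Finset.card_insert_of_notMem (by simp [Prod.ext_iff]; tauto),
      Finset.card_insert_of_notMem (by simp [Prod.ext_iff]; tauto),
      Finset.card_insert_of_notMem (by simp [Prod.ext_iff]; tauto),
      Finset.card_singleton]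


lemma triLabeled_eq_six : triLabeled G = 6 * (G.cliqueFinset 3).card := by
  rw [triLabeled,
    Finset.card_eq_sum_card_fiberwise
      (f := fun t : V × V × V => ({t.1, t.2.1, t.2.2} : Finset V))
      (t := G.cliqueFinset 3)
      (fun t ht => by
        simp only [mem_coe, mem_filter] at ht
        exact (G.mem_cliqueFinset_iff).2
          (is3Clique_triple_iff.2 ⟨ht.2.1, ht.2.2.1, ht.2.2.2⟩))]
  rw [Finset.sum_congr rfl fun s hs => ?_, Finset.sum_const, smul_eq_mul, mul_comm]
  obtain ⟨a, b, c, hab, hac, hbc, rfl⟩ := is3Clique_iff.1 ((G.mem_cliqueFinset_iff).1 hs)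
  exact fiber_card G hab hac hbc


lemma c4_eq_sum :
    ((Finset.univ : Finset (V × V × V × V)).filter fun p =>
      p.1 ≠ p.2.1 ∧ p.1 ≠ p.2.2.1 ∧ p.1 ≠ p.2.2.2 ∧
      p.2.1 ≠ p.2.2.1 ∧ p.2.1 ≠ p.2.2.2 ∧ p.2.2.1 ≠ p.2.2.2 ∧
      G.Adj p.1 p.2.1 ∧ G.Adj p.2.1 p.2.2.1 ∧
      G.Adj p.2.2.1 p.2.2.2 ∧ G.Adj p.2.2.2 p.1).card
    = ∑ v, ∑ a ∈ G.neighborFinset v, ∑ c ∈ (G.neighborFinset v).erase a,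
        ((G.neighborFinset a ∩ G.neighborFinset c).erase v).card := by
  rw [Finset.card_filter, Fintype.sum_prod_type]
  refine Finset.sum_congr rfl fun v _ => ?_
  rw [Fintype.sum_prod_type]
  have key : ∀ a : V, (∑ y : V × V, if v ≠ a ∧ v ≠ (a, y).2.1 ∧ v ≠ (a, y).2.2 ∧
        a ≠ (a, y).2.1 ∧ a ≠ (a, y).2.2 ∧ (a, y).2.1 ≠ (a, y).2.2 ∧
        G.Adj v a ∧ G.Adj a (a, y).2.1 ∧ G.Adj (a, y).2.1 (a, y).2.2 ∧
        G.Adj (a, y).2.2 v then 1 else 0)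
      = ∑ c : V, if G.Adj v a ∧ G.Adj v c ∧ a ≠ c then
          ((G.neighborFinset a ∩ G.neighborFinset c).erase v).card else 0 := by
    intro a
    rw [Fintype.sum_prod_type, Finset.sum_comm]
    refine Finset.sum_congr rfl fun c _ => ?_
    by_cases h : G.Adj v a ∧ G.Adj v c ∧ a ≠ c
    · rw [if_pos h]
      have hb : ∀ b : V, (v ≠ a ∧ v ≠ b ∧ v ≠ c ∧ a ≠ b ∧ a ≠ c ∧ b ≠ c ∧
          G.Adj v a ∧ G.Adj a b ∧ G.Adj b c ∧ G.Adj c v)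
          ↔ b ∈ (G.neighborFinset a ∩ G.neighborFinset c).erase v := by
        intro b
        simp only [mem_erase, mem_inter, mem_neighborFinset]
        constructor
        · rintro ⟨_, h2, _, _, _, _, _, h8, h9, _⟩
          exact ⟨Ne.symm h2, h8, h9.symm⟩
        · rintro ⟨hbv, hab, hcb⟩
          exact ⟨G.ne_of_adj h.1, Ne.symm hbv, G.ne_of_adj h.2.1, G.ne_of_adj hab,
            h.2.2, (G.ne_of_adj hcb).symm, h.1, hab, hcb.symm, h.2.1.symm⟩
      simp only [hb]
      simp only [Finset.sum_ite_mem, Finset.univ_inter, Finset.sum_const, smul_eq_mul, mul_one]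
    · rw [if_neg h]
      refine Finset.sum_eq_zero fun b _ => ?_
      rw [if_neg]
      rintro ⟨_, _, _, _, h5, _, h7, _, _, h10⟩
      exact h ⟨h7, h10.symm, h5⟩
  rw [Finset.sum_congr rfl fun a _ => key a]
  rw [G.neighborFinset_eq_filter, Finset.sum_filter]
  refine Finset.sum_congr rfl fun a _ => ?_
  by_cases h : G.Adj v a
  · simp only [h, true_and, if_true]
    have he : (filter (fun w => G.Adj v w) univ).erase a
        = filter (fun c => G.Adj v c ∧ a ≠ c) univ := by
      ext x
      simp only [mem_erase, mem_filter, mem_univ, true_and]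
      constructor
      · rintro ⟨h1, h2⟩; exact ⟨h2, Ne.symm h1⟩
      · rintro ⟨h1, h2⟩; exact ⟨Ne.symm h2, h1⟩
    rw [he, Finset.sum_filter]
  · simp [h]


lemma pair_bound {d : ℕ} (hreg : G.IsRegularOfDegree d) {v a c : V}
    (ha : G.Adj v a) (hc : G.Adj v c) (hac : a ≠ c) :
    (d : ℤ) - nuAux G v a - nuAux G v c - (if G.Adj a c then 2 else 0)
      ≤ ((G.neighborFinset a ∩ G.neighborFinset c).erase v).card := by
  classical
  set Nv := G.neighborFinset v with hNv
  set X := (Nv ∩ G.neighborFinset a).erase c with hX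
  set Y := (Nv ∩ G.neighborFinset c).erase a with hY
  set Z := (Nv.erase a).erase c with hZ
  have haNv : a ∈ Nv := (G.mem_neighborFinset v a).2 ha
  have hcNv : c ∈ Nv := (G.mem_neighborFinset v c).2 hc
  have hXZ : X ⊆ Z := by
    intro x hx
    simp only [hX, hZ, mem_erase, mem_inter, mem_neighborFinset] at hx ⊢
    exact ⟨hx.1, (G.ne_of_adj hx.2.2).symm, hx.2.1⟩
  have hYZ : Y ⊆ Z := by
    intro x hx
    simp only [hY, hZ, mem_erase, mem_inter, mem_neighborFinset] at hx ⊢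
    exact ⟨(G.ne_of_adj hx.2.2).symm, hx.1, hx.2.1⟩
  have hXYT : X ∩ Y ⊆ (G.neighborFinset a ∩ G.neighborFinset c).erase v := by
    intro x hx
    simp only [hX, hY, mem_inter, mem_erase, mem_neighborFinset, hNv] at hx ⊢
    exact ⟨(G.ne_of_adj hx.1.2.1).symm, hx.1.2.2, hx.2.2.2⟩
  have hIU : (X ∩ Y).card + (X ∪ Y).card = X.card + Y.card :=
    Finset.card_inter_add_card_union X Y
  have hU : (X ∪ Y).card ≤ Z.card := Finset.card_le_card (Finset.union_subset hXZ hYZ)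
  have hT : (X ∩ Y).card ≤ ((G.neighborFinset a ∩ G.neighborFinset c).erase v).card :=
    Finset.card_le_card hXYT
  have hd2 : 2 ≤ d := by
    have : ({a, c} : Finset V) ⊆ Nv := by
      intro x hx
      rcases Finset.mem_insert.1 hx with rfl | hx
      · exact haNv
      · rw [Finset.mem_singleton.1 hx]; exact hcNv
    have h2 := Finset.card_le_card this
    rwa [Finset.card_insert_of_notMem (by simpa using hac), Finset.card_singleton,
      hNv, card_neighborFinset_eq_degree, hreg v] at h2
  have hZcard : Z.card = d - 2 := by
    rw [hZ, Finset.card_erase_of_mem (Finset.mem_erase.2 ⟨Ne.symm hac, hcNv⟩),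
      Finset.card_erase_of_mem haNv, hNv, card_neighborFinset_eq_degree, hreg v]
    omega
  have hA : (Nv ∩ G.neighborFinset a).card + nuAux G v a = d - 1 := by
    rw [hNv, inter_nbr_card G ha, hreg v]
  have hC : (Nv ∩ G.neighborFinset c).card + nuAux G v c = d - 1 := by
    rw [hNv, inter_nbr_card G hc, hreg v]
  have hXc : (Nv ∩ G.neighborFinset a).card ≤ X.card + (if G.Adj a c then 1 else 0) := by
    by_cases hadj : G.Adj a c
    · rw [if_pos hadj]
      have := Finset.pred_card_le_card_erase (s := Nv ∩ G.neighborFinset a) (a := c)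
      rw [← hX] at this
      omega
    · rw [if_neg hadj, hX, Finset.erase_eq_of_notMem
        (fun hmem => hadj ((G.mem_neighborFinset a c).1 (Finset.mem_inter.1 hmem).2))]
      omega
  have hYc : (Nv ∩ G.neighborFinset c).card ≤ Y.card + (if G.Adj a c then 1 else 0) := by
    by_cases hadj : G.Adj a c
    · rw [if_pos hadj]
      have := Finset.pred_card_le_card_erase (s := Nv ∩ G.neighborFinset c) (a := a)
      rw [← hY] at this
      omega
    · rw [if_neg hadj, hY, Finset.erase_eq_of_notMem
        (fun hmem => hadj (G.adj_symm ((G.mem_neighborFinset c a).1 (Finset.mem_inter.1 hmem).2)))]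
      omega
  by_cases hadj : G.Adj a c
  · rw [if_pos hadj]; rw [if_pos hadj] at hXc hYc; omega
  · rw [if_neg hadj]; rw [if_neg hadj] at hXc hYc; omega


lemma vertex_bound {d : ℕ} (hreg : G.IsRegularOfDegree d) (v : V) :
    (d : ℤ) * ((d:ℤ) - 1) * ((d:ℤ) - 2) - 2 * ((d:ℤ) - 2) * (svAux G v : ℤ)
      ≤ ∑ a ∈ G.neighborFinset v, ∑ c ∈ (G.neighborFinset v).erase a,
          (((G.neighborFinset a ∩ G.neighborFinset c).erase v).card : ℤ) := by
  classical
  set Nv := G.neighborFinset v with hNv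
  have hNvcard : Nv.card = d := by rw [hNv, card_neighborFinset_eq_degree, hreg v]
  have hle : ∑ a ∈ Nv, ∑ c ∈ Nv.erase a,
      ((d:ℤ) - nuAux G v a - nuAux G v c - (if G.Adj a c then 2 else 0))
      ≤ ∑ a ∈ Nv, ∑ c ∈ Nv.erase a,
          (((G.neighborFinset a ∩ G.neighborFinset c).erase v).card : ℤ) := by
    refine Finset.sum_le_sum fun a haN => Finset.sum_le_sum fun c hcN => ?_
    exact pair_bound G hreg ((G.mem_neighborFinset v a).1 haN)
      ((G.mem_neighborFinset v c).1 (Finset.mem_of_mem_erase hcN))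
      (Ne.symm (Finset.ne_of_mem_erase hcN))
  refine le_trans (le_of_eq ?_) hle
  have hd1 : 1 ≤ d ∨ Nv = ∅ := by
    rcases Finset.eq_empty_or_nonempty Nv with he | hne
    · exact Or.inr he
    · exact Or.inl (by rw [← hNvcard]; exact Finset.card_pos.2 hne)
  rcases hd1 with hd1 | hempty
  swap
  · rw [hempty]
    simp only [Finset.sum_empty]
    have : svAux G v = 0 := by
      rw [svAux, ← hNv, hempty, Finset.sum_empty]
    rw [this]
    have hd0 : d = 0 := by rw [← hNvcard, hempty, Finset.card_empty]
    subst hd0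
    push_cast
  have hval : ∀ a ∈ Nv, (∑ c ∈ Nv.erase a,
      ((d:ℤ) - nuAux G v a - nuAux G v c - (if G.Adj a c then 2 else 0)))
      = ((d-1)*d - (svAux G v : ℤ) - 2*((d:ℤ)-1)) + (4 - (d:ℤ)) * (nuAux G v a : ℤ) := by
    intro a haN
    have hadj : G.Adj v a := (G.mem_neighborFinset v a).1 haN
    have hE : (Nv.erase a).card = d - 1 := by
      rw [Finset.card_erase_of_mem haN, hNvcard]
    have hEcast : ((Nv.erase a).card : ℤ) = (d:ℤ) - 1 := by rw [hE]; omega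
    have hsum_nc : ∑ c ∈ Nv.erase a, (nuAux G v c : ℤ)
        = (svAux G v : ℤ) - (nuAux G v a : ℤ) := by
      have h0 := Finset.sum_erase_add Nv (fun c => (nuAux G v c : ℤ)) haN
      have hsv : ∑ c ∈ Nv, (nuAux G v c : ℤ) = (svAux G v : ℤ) := by
        rw [svAux, ← hNv, Nat.cast_sum]
      rw [hsv] at h0
      linarith
    have hsum_ite : ∑ c ∈ Nv.erase a, (if G.Adj a c then (2:ℤ) else 0)
        = 2 * ((Nv ∩ G.neighborFinset a).card : ℤ) := by
      rw [← Finset.sum_filter]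
      rw [hNv, filter_adj_erase]
      rw [Finset.sum_const, ← hNv]
      push_cast
      ring
    have hinter : ((Nv ∩ G.neighborFinset a).card : ℤ) = (d:ℤ) - 1 - (nuAux G v a : ℤ) := by
      have h2 := inter_nbr_card G hadj
      rw [hreg v] at h2
      rw [← hNv] at h2
      omega
    rw [Finset.sum_sub_distrib, Finset.sum_sub_distrib, hsum_nc, hsum_ite, hinter,
      Finset.sum_sub_distrib, Finset.sum_const, Finset.sum_const, nsmul_eq_mul,
      nsmul_eq_mul, hEcast]
    ring
  rw [Finset.sum_congr rfl hval, Finset.sum_add_distrib, Finset.sum_const, hNvcard,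
    ← Finset.mul_sum]
  have hsv : ∑ a ∈ Nv, (nuAux G v a : ℤ) = (svAux G v : ℤ) := by
    rw [svAux, ← hNv, Nat.cast_sum]
  rw [hsv]
  push_cast
  ring


lemma tri_identity {d : ℕ} (hreg : G.IsRegularOfDegree d) :
    triLabeled G + ∑ v, svAux G v = Fintype.card V * (d * (d - 1)) := by
  rw [triLabeled_eq_sum, ← Finset.sum_add_distrib]
  have hv : ∀ v : V, (∑ a ∈ G.neighborFinset v,
      (G.neighborFinset v ∩ G.neighborFinset a).card) + svAux G v = d * (d - 1) := by
    intro v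
    rw [svAux, ← Finset.sum_add_distrib]
    have : ∀ a ∈ G.neighborFinset v,
        (G.neighborFinset v ∩ G.neighborFinset a).card + nuAux G v a = d - 1 := by
      intro a ha
      rw [inter_nbr_card G ((G.mem_neighborFinset v a).1 ha), hreg v]
    rw [Finset.sum_congr rfl this, Finset.sum_const, card_neighborFinset_eq_degree,
      hreg v, smul_eq_mul]
  rw [Finset.sum_congr rfl fun v _ => hv v, Finset.sum_const, card_univ, smul_eq_mul]

end Aux


section KAux

lemma top_reg (d : ℕ) : (⊤ : SimpleGraph (Fin (d + 1))).IsRegularOfDegree d := by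
  have h := SimpleGraph.IsRegularOfDegree.top (V := Fin (d + 1))
  simpa using h

lemma top_sv (d : ℕ) (v : Fin (d + 1)) :
    svAux (⊤ : SimpleGraph (Fin (d + 1))) v = 0 := by
  rw [svAux]
  refine Finset.sum_eq_zero fun a ha => ?_
  rw [nuAux, Finset.card_eq_zero]
  refine Finset.filter_eq_empty_iff.2 fun x hx => ?_
  simp only [top_adj, not_not]
  exact Ne.symm (Finset.mem_erase.1 hx).1

lemma top_triLabeled (d : ℕ) :
    triLabeled (⊤ : SimpleGraph (Fin (d + 1))) = (d + 1) * (d * (d - 1)) := by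
  have h := tri_identity (⊤ : SimpleGraph (Fin (d + 1))) (top_reg d)
  rw [Finset.sum_congr rfl fun v _ => top_sv d v, Finset.sum_const, smul_eq_mul,
    mul_zero, add_zero, Fintype.card_fin] at h
  exact h

lemma top_inner (d : ℕ) (v a c : Fin (d + 1)) (hac : a ≠ c) (hva : v ≠ a) (hvc : v ≠ c) :
    (((⊤ : SimpleGraph (Fin (d + 1))).neighborFinset a ∩
      (⊤ : SimpleGraph (Fin (d + 1))).neighborFinset c).erase v).card = d + 1 - 3 := by
  have hset : (((⊤ : SimpleGraph (Fin (d + 1))).neighborFinset a ∩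
      (⊤ : SimpleGraph (Fin (d + 1))).neighborFinset c).erase v)
      = ((Finset.univ.erase a).erase c).erase v := by
    ext x
    simp only [Finset.mem_erase, Finset.mem_inter, mem_neighborFinset, top_adj,
      Finset.mem_univ, and_true, ne_eq]
    constructor
    · rintro ⟨h1, h2, h3⟩; exact ⟨h1, Ne.symm h3, Ne.symm h2⟩
    · rintro ⟨h1, h2, h3⟩; exact ⟨h1, Ne.symm h3, Ne.symm h2⟩
  rw [hset, Finset.card_erase_of_mem (Finset.mem_erase.2 ⟨hvc,
      Finset.mem_erase.2 ⟨hva, Finset.mem_univ v⟩⟩),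
    Finset.card_erase_of_mem (Finset.mem_erase.2 ⟨Ne.symm hac, Finset.mem_univ c⟩),
    Finset.card_erase_of_mem (Finset.mem_univ a), Finset.card_univ, Fintype.card_fin]
  omega

lemma top_c4sum (d : ℕ) :
    (∑ v : Fin (d + 1), ∑ a ∈ (⊤ : SimpleGraph (Fin (d + 1))).neighborFinset v,
      ∑ c ∈ ((⊤ : SimpleGraph (Fin (d + 1))).neighborFinset v).erase a,
        (((⊤ : SimpleGraph (Fin (d + 1))).neighborFinset a ∩
          (⊤ : SimpleGraph (Fin (d + 1))).neighborFinset c).erase v).card)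
    = (d + 1) * (d * ((d - 1) * (d + 1 - 3))) := by
  have hv : ∀ v : Fin (d + 1), (∑ a ∈ (⊤ : SimpleGraph (Fin (d + 1))).neighborFinset v,
      ∑ c ∈ ((⊤ : SimpleGraph (Fin (d + 1))).neighborFinset v).erase a,
        (((⊤ : SimpleGraph (Fin (d + 1))).neighborFinset a ∩
          (⊤ : SimpleGraph (Fin (d + 1))).neighborFinset c).erase v).card)
      = d * ((d - 1) * (d + 1 - 3)) := by
    intro v
    have ha : ∀ a ∈ (⊤ : SimpleGraph (Fin (d + 1))).neighborFinset v,
        (∑ c ∈ ((⊤ : SimpleGraph (Fin (d + 1))).neighborFinset v).erase a,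
          (((⊤ : SimpleGraph (Fin (d + 1))).neighborFinset a ∩
            (⊤ : SimpleGraph (Fin (d + 1))).neighborFinset c).erase v).card)
        = (d - 1) * (d + 1 - 3) := by
      intro a haN
      have hva : v ≠ a := ((⊤ : SimpleGraph (Fin (d+1))).mem_neighborFinset v a).1 haN
      have hc : ∀ c ∈ ((⊤ : SimpleGraph (Fin (d + 1))).neighborFinset v).erase a,
          (((⊤ : SimpleGraph (Fin (d + 1))).neighborFinset a ∩
            (⊤ : SimpleGraph (Fin (d + 1))).neighborFinset c).erase v).card = d + 1 - 3 := by
        intro c hcN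
        have hvc : v ≠ c := ((⊤ : SimpleGraph (Fin (d+1))).mem_neighborFinset v c).1
          (Finset.mem_of_mem_erase hcN)
        exact top_inner d v a c (Ne.symm (Finset.ne_of_mem_erase hcN)) hva hvc
      rw [Finset.sum_congr rfl hc, Finset.sum_const, smul_eq_mul,
        Finset.card_erase_of_mem haN, card_neighborFinset_eq_degree, top_reg d v]
    rw [Finset.sum_congr rfl ha, Finset.sum_const, smul_eq_mul,
      card_neighborFinset_eq_degree, top_reg d v]
  rw [Finset.sum_congr rfl fun v _ => hv v, Finset.sum_const, smul_eq_mul,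
    card_univ, Fintype.card_fin]

end KAux

lemma cast_mul_pred (d : ℕ) : ((d * (d - 1) : ℕ) : ℝ) = (d:ℝ) * ((d:ℝ) - 1) := by
  cases d with
  | zero => simp
  | succ n => push_cast [Nat.succ_sub_one]; ring

lemma cast_mul_pred2 (d : ℕ) :
    ((d * ((d - 1) * (d - 2)) : ℕ) : ℝ) = (d:ℝ) * (((d:ℝ) - 1) * ((d:ℝ) - 2)) := by
  match d with
  | 0 => simp
  | 1 => norm_num
  | (n+2) =>
    have h1 : (n+2) - 1 = n+1 := rfl
    have h2 : (n+2) - 2 = n := rfl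
    rw [h1, h2]; push_cast; ring

lemma triCount_eq' {V : Type*} [Fintype V] [DecidableEq V] (G : SimpleGraph V)
    [DecidableRel G.Adj] : triCount G = (G.cliqueFinset 3).card := by
  unfold triCount; congr!

lemma c4Labeled_eq' {V : Type*} [Fintype V] [DecidableEq V] (G : SimpleGraph V)
    [DecidableRel G.Adj] : c4Labeled G =
    ((Finset.univ : Finset (V × V × V × V)).filter fun p =>
      p.1 ≠ p.2.1 ∧ p.1 ≠ p.2.2.1 ∧ p.1 ≠ p.2.2.2 ∧
      p.2.1 ≠ p.2.2.1 ∧ p.2.1 ≠ p.2.2.2 ∧ p.2.2.1 ≠ p.2.2.2 ∧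
      G.Adj p.1 p.2.1 ∧ G.Adj p.2.1 p.2.2.1 ∧
      G.Adj p.2.2.1 p.2.2.2 ∧ G.Adj p.2.2.2 p.1).card := by
  unfold c4Labeled; congr!

/-- if `G` is `d`-regular with no connected component isomorphic to
`K_{d+1}` (equivalently, for a `d`-regular graph, no `(d+1)`-clique), then
`ρ(C₄, K_{d+1}) − ρ(C₄, G) ≤ (3(d-2)/2)·(ρ(C₃, K_{d+1}) − ρ(C₃, G))`. -/
theorem four_cycle_density_gap {V : Type*} [Fintype V] [Nonempty V]
    (d : ℕ) (G : SimpleGraph V) [DecidableRel G.Adj]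
    (hreg : G.IsRegularOfDegree d) (hfree : G.CliqueFree (d + 1)) :
    rho4 (⊤ : SimpleGraph (Fin (d + 1))) - rho4 G ≤
      3 * ((d : ℝ) - 2) / 2 * (rho3 (⊤ : SimpleGraph (Fin (d + 1))) - rho3 G) := by
  classical
  set n := Fintype.card V with hn
  have hn0 : 0 < n := Fintype.card_pos
  set S : ℕ := ∑ v, svAux G v with hS
  -- triangle count of G
  have htriG : 6 * (triCount G : ℝ) + (S : ℝ) = (n : ℝ) * ((d:ℝ) * ((d:ℝ) - 1)) := by
    have h1 := tri_identity G hreg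
    have h2 : triLabeled G = 6 * triCount G := by
      rw [triCount_eq']; exact triLabeled_eq_six G
    rw [h2] at h1
    have h3 : ((6 * triCount G + S : ℕ) : ℝ) = ((n * (d * (d-1)) : ℕ) : ℝ) := by
      exact_mod_cast congrArg (fun k : ℕ => (k : ℝ)) h1
    rw [Nat.cast_mul, cast_mul_pred] at h3
    push_cast at h3
    linarith
  -- triangle count of K
  have htriK : 6 * (triCount (⊤ : SimpleGraph (Fin (d + 1))) : ℝ)
      = ((d:ℝ) + 1) * ((d:ℝ) * ((d:ℝ) - 1)) := by
    have h1 := top_triLabeled d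
    have h2 : triLabeled (⊤ : SimpleGraph (Fin (d + 1)))
        = 6 * triCount (⊤ : SimpleGraph (Fin (d + 1))) := by
      rw [triCount_eq']; exact triLabeled_eq_six _
    rw [h2] at h1
    have hr : (((d+1) * (d * (d-1)) : ℕ) : ℝ) = ((d:ℝ)+1) * ((d:ℝ) * ((d:ℝ)-1)) := by
      rw [Nat.cast_mul, cast_mul_pred]; push_cast; ring
    have h3 : ((6 * triCount (⊤ : SimpleGraph (Fin (d + 1))) : ℕ) : ℝ)
        = (((d+1) * (d * (d-1)) : ℕ) : ℝ) := by exact_mod_cast congrArg (fun k : ℕ => (k : ℝ)) h1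
    rw [hr] at h3
    push_cast at h3
    linarith
  -- 4-cycle count of K
  have hc4K : (c4Labeled (⊤ : SimpleGraph (Fin (d + 1))) : ℝ)
      = ((d:ℝ) + 1) * ((d:ℝ) * (((d:ℝ) - 1) * ((d:ℝ) - 2))) := by
    have h1 : c4Labeled (⊤ : SimpleGraph (Fin (d + 1)))
        = (d + 1) * (d * ((d - 1) * (d + 1 - 3))) := by
      rw [c4Labeled_eq', c4_eq_sum, top_c4sum]
    have h13 : d + 1 - 3 = d - 2 := by omega
    rw [h13] at h1
    rw [h1, Nat.cast_mul, cast_mul_pred2]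
    push_cast
    ring
  -- 4-cycle count of G : lower bound
  have hc4G : (n:ℝ) * ((d:ℝ) * (((d:ℝ) - 1) * ((d:ℝ) - 2))) - 2*((d:ℝ)-2)*(S:ℝ)
      ≤ (c4Labeled G : ℝ) := by
    have hZ : (n:ℤ) * ((d:ℤ) * (((d:ℤ) - 1) * ((d:ℤ) - 2))) - 2*((d:ℤ)-2)*(S:ℤ)
        ≤ (c4Labeled G : ℤ) := by
      have hsum : (c4Labeled G : ℤ) = ∑ v, ∑ a ∈ G.neighborFinset v,
          ∑ c ∈ (G.neighborFinset v).erase a,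
            (((G.neighborFinset a ∩ G.neighborFinset c).erase v).card : ℤ) := by
        rw [c4Labeled_eq', c4_eq_sum]
        push_cast
        rfl
      rw [hsum]
      have hstep : ∑ v : V, ((d:ℤ) * ((d:ℤ) - 1) * ((d:ℤ) - 2)
            - 2 * ((d:ℤ) - 2) * (svAux G v : ℤ))
          ≤ ∑ v, ∑ a ∈ G.neighborFinset v, ∑ c ∈ (G.neighborFinset v).erase a,
            (((G.neighborFinset a ∩ G.neighborFinset c).erase v).card : ℤ) :=
        Finset.sum_le_sum fun v _ => vertex_bound G hreg v
      refine le_trans (le_of_eq ?_) hstep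
      rw [Finset.sum_sub_distrib, Finset.sum_const, card_univ, ← hn, ← Finset.mul_sum]
      have hSc : ∑ v : V, (svAux G v : ℤ) = (S:ℤ) := by rw [hS]; push_cast; rfl
      rw [hSc, nsmul_eq_mul]
      ring
    calc (n:ℝ) * ((d:ℝ) * (((d:ℝ) - 1) * ((d:ℝ) - 2))) - 2*((d:ℝ)-2)*(S:ℝ)
        = (((n:ℤ) * ((d:ℤ) * (((d:ℤ) - 1) * ((d:ℤ) - 2))) - 2*((d:ℤ)-2)*(S:ℤ) : ℤ) : ℝ) := by
          push_cast; ring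
      _ ≤ ((c4Labeled G : ℤ) : ℝ) := by exact_mod_cast hZ
      _ = (c4Labeled G : ℝ) := by push_cast; rfl
  -- final assembly
  simp only [rho3, rho4, Fintype.card_fin, ← hn]
  have hnR : (0:ℝ) < (n:ℝ) := by exact_mod_cast hn0
  have hd1 : (0:ℝ) < (d:ℝ) + 1 := by positivity
  have hcast1 : ((d + 1 : ℕ) : ℝ) = (d:ℝ) + 1 := by push_cast; ring
  rw [hcast1]
  have e1 : (c4Labeled (⊤ : SimpleGraph (Fin (d + 1))) : ℝ) / (8 * ((d:ℝ) + 1))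
      = (d:ℝ) * (((d:ℝ) - 1) * ((d:ℝ) - 2)) / 8 := by
    rw [hc4K]; field_simp
  have e2 : (triCount (⊤ : SimpleGraph (Fin (d + 1))) : ℝ) / ((d:ℝ) + 1)
      = (d:ℝ) * ((d:ℝ) - 1) / 6 := by
    rw [div_eq_div_iff hd1.ne' (by norm_num : (6:ℝ) ≠ 0)]
    linear_combination htriK
  have e3 : (triCount G : ℝ) / (n:ℝ)
      = (d:ℝ) * ((d:ℝ) - 1) / 6 - (S:ℝ) / (6 * (n:ℝ)) := by
    rw [eq_sub_iff_add_eq, div_add_div _ _ hnR.ne' (mul_pos (by norm_num) hnR).ne',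
      div_eq_div_iff (mul_pos hnR (mul_pos (by norm_num) hnR)).ne' (by norm_num : (6:ℝ) ≠ 0)]
    linear_combination (6*(n:ℝ)) * htriG
  have hdiv : ((n:ℝ) * ((d:ℝ) * (((d:ℝ) - 1) * ((d:ℝ) - 2))) - 2*((d:ℝ)-2)*(S:ℝ)) / (8 * (n:ℝ))
      ≤ (c4Labeled G : ℝ) / (8 * (n:ℝ)) := by
    gcongr
  have heq : ((n:ℝ) * ((d:ℝ) * (((d:ℝ) - 1) * ((d:ℝ) - 2))) - 2*((d:ℝ)-2)*(S:ℝ)) / (8 * (n:ℝ))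
      = (d:ℝ) * (((d:ℝ) - 1) * ((d:ℝ) - 2)) / 8 - ((d:ℝ)-2) * (S:ℝ) / (4 * (n:ℝ)) := by
    field_simp
    ring
  rw [e1, e2, e3]
  have hrhs : 3*((d:ℝ)-2)/2 * ((d:ℝ) * ((d:ℝ) - 1) / 6
      - ((d:ℝ) * ((d:ℝ) - 1) / 6 - (S:ℝ) / (6 * (n:ℝ))))
      = ((d:ℝ)-2) * (S:ℝ) / (4 * (n:ℝ)) := by
    field_simp
    ring
  rw [hrhs]
  rw [heq] at hdiv
  linarith
end
end
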